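/- If n ≥ 4 and n ≡ 5, 9 or 13 (mod 15), then the largest minimum weight among all binary LCD [n,4] codes equals ⌊8n/15⌋. -/

import Mathlib

/-- The (Hamming) weight of a vector over `F_2`. -/
def wt {n : ℕ} (x : Fin n → ZMod 2) : ℕ :=
  Finset.card (Finset.univ.filter fun i => x i ≠ 0)

/-- The dual code of a binary code `C`, with respect to the standard inner product. -/
def dualCode {n : ℕ} (C : Submodule (ZMod 2) (Fin n → ZMod 2)) :
    Submodule (ZMod 2) (Fin n → ZMod 2) where
  carrier := {x | ∀ y ∈ C, ∑ i, x i * y i = 0}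
  add_mem' := by
    intro a b ha hb y hy
    simp [Pi.add_apply, add_mul, Finset.sum_add_distrib, ha y hy, hb y hy]
  zero_mem' := by
    intro y hy
    simp
  smul_mem' := by
    intro c a ha y hy
    simp only [Pi.smul_apply, smul_eq_mul, mul_assoc, ← Finset.mul_sum, ha y hy, mul_zero]

/-- A binary code is linear complementary dual (LCD) if it meets its dual trivially. -/
def IsLCD {n : ℕ} (C : Submodule (ZMod 2) (Fin n → ZMod 2)) : Prop :=
  C ⊓ dualCode C = ⊥

/-- The minimum weight of a binary code: the smallest weight of a nonzero codeword. -/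
noncomputable def minWt {n : ℕ} (C : Submodule (ZMod 2) (Fin n → ZMod 2)) : ℕ :=
  sInf {w | ∃ x ∈ C, x ≠ 0 ∧ wt x = w}

/-- `dLCD n k` is the largest minimum weight among all binary LCD `[n,k]` codes. -/
noncomputable def dLCD (n k : ℕ) : ℕ :=
  sSup {d | ∃ C : Submodule (ZMod 2) (Fin n → ZMod 2),
    Module.finrank (ZMod 2) C = k ∧ IsLCD C ∧ minWt C = d}


/-! ### Auxiliary material -/

/-- Enumeration of the nonzero vectors of `F_2^4`. -/
def evec : Fin 15 → Fin 4 → ZMod 2 := fun j i => ((((j : ℕ) + 1) / 2 ^ (i : ℕ) % 2 : ℕ) : ZMod 2)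

lemma evec_sum : ∀ j k : Fin 4, ∑ v : Fin 15, evec v j * evec v k = 0 := by decide

lemma evec_card : ∀ u : Fin 4 → ZMod 2, u ≠ 0 →
    (Finset.univ.filter fun j : Fin 15 => ∑ i, u i * evec j i ≠ 0).card = 8 := by decide

/-- The conditions we need on the "residual" generator matrix `A`. -/
def goodA {r : ℕ} (A : Fin 4 → Fin r → ZMod 2) (dr : ℕ) : Prop :=
  (∀ u : Fin 4 → ZMod 2, u ≠ 0 → dr ≤ (Finset.univ.filter fun t => ∑ i, u i * A i t ≠ 0).card) ∧
  (∃ u : Fin 4 → ZMod 2, u ≠ 0 ∧ (Finset.univ.filter fun t => ∑ i, u i * A i t ≠ 0).card = dr) ∧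
  (∀ u : Fin 4 → ZMod 2, (∀ i, ∑ j, u j * ∑ t, A j t * A i t = 0) → u = 0)

instance {r : ℕ} (A : Fin 4 → Fin r → ZMod 2) (dr : ℕ) : Decidable (goodA A dr) := by
  unfold goodA; infer_instance

def A5 : Fin 4 → Fin 5 → ZMod 2 :=
  ![![1,0,1,1,1],![0,1,1,0,0],![0,1,1,1,1],![1,0,0,0,1]]
def A9 : Fin 4 → Fin 9 → ZMod 2 :=
  ![![1,0,1,1,1,0,1,1,0],![0,1,1,1,0,0,0,1,0],![1,1,1,0,1,1,0,1,0],![0,1,0,0,1,1,1,1,1]]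
def A13 : Fin 4 → Fin 13 → ZMod 2 :=
  ![![1,0,1,0,1,0,1,0,1,1,1,0,1],![1,1,1,1,0,0,0,1,0,0,0,0,1],
    ![1,0,0,0,1,1,0,0,0,1,0,1,1],![0,1,1,0,1,0,1,1,0,0,1,1,1]]

lemma goodA5 : goodA A5 2 := by decide
lemma goodA9 : goodA A9 4 := by decide
lemma goodA13 : goodA A13 6 := by decide

lemma wt_eq_sum {n : ℕ} (x : Fin n → ZMod 2) :
    wt x = ∑ i, if x i ≠ 0 then 1 else 0 := Finset.card_filter _ _

/-- The column function of the generator matrix. -/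
def colfun {m r : ℕ} (A : Fin 4 → Fin r → ZMod 2) :
    (Fin m × Fin 15) ⊕ Fin r → Fin 4 → ZMod 2 :=
  Sum.elim (fun p => evec p.2) (fun t i => A i t)

def sigEquiv (n m r : ℕ) (hn : n = m * 15 + r) : Fin n ≃ (Fin m × Fin 15) ⊕ Fin r :=
  (finCongr hn).trans (finSumFinEquiv.symm.trans
    (Equiv.sumCongr finProdFinEquiv.symm (Equiv.refl _)))

/-- The generator matrix: `m` copies of the simplex code, followed by `A`. -/
def genG {n m r : ℕ} (hn : n = m * 15 + r) (A : Fin 4 → Fin r → ZMod 2) :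
    Matrix (Fin 4) (Fin n) (ZMod 2) :=
  fun i x => colfun A (sigEquiv n m r hn x) i

lemma transport {n m r : ℕ} (hn : n = m * 15 + r) (A : Fin 4 → Fin r → ZMod 2)
    {M : Type*} [AddCommMonoid M] (g : (Fin 4 → ZMod 2) → M) :
    ∑ x : Fin n, g (fun i => genG hn A i x) =
      m • (∑ v : Fin 15, g (evec v)) + ∑ t : Fin r, g (fun i => A i t) := by
  have h1 : ∑ x : Fin n, g (fun i => genG hn A i x)
      = ∑ s : (Fin m × Fin 15) ⊕ Fin r, g (fun i => colfun A s i) :=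
    Equiv.sum_comp (sigEquiv n m r hn) (fun s => g (fun i => colfun A s i))
  rw [h1, Fintype.sum_sum_type, Fintype.sum_prod_type]
  simp [colfun, Finset.sum_const]

lemma vecMul_genG_apply {n m r : ℕ} (hn : n = m * 15 + r) (A : Fin 4 → Fin r → ZMod 2)
    (u : Fin 4 → ZMod 2) (x : Fin n) :
    (genG hn A).vecMulLinear u x = ∑ i, u i * genG hn A i x := by
  simp [Matrix.vecMulLinear_apply, Matrix.vecMul, dotProduct]

lemma wt_vecMul_genG {n m r dr : ℕ} (hn : n = m * 15 + r) (A : Fin 4 → Fin r → ZMod 2)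
    (hA : goodA A dr) (u : Fin 4 → ZMod 2) (hu : u ≠ 0) :
    wt ((genG hn A).vecMulLinear u) =
      m * 8 + (Finset.univ.filter fun t => ∑ i, u i * A i t ≠ 0).card := by
  rw [wt_eq_sum]
  have ht := transport hn A (fun col => if (∑ i, u i * col i) ≠ 0 then (1 : ℕ) else 0)
  simp only at ht
  simp only [vecMul_genG_apply hn A u]
  rw [ht, ← Finset.card_filter, ← Finset.card_filter, evec_card u hu, smul_eq_mul]

lemma zmod2_add : ∀ a b : ZMod 2, a ≠ 0 → b ≠ 0 → a + b = 0 := by decide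

lemma wt_zero {n : ℕ} : wt (0 : Fin n → ZMod 2) = 0 := by simp [wt]

lemma construction {n m r dr : ℕ} (hn : n = m * 15 + r) (A : Fin 4 → Fin r → ZMod 2)
    (hA : goodA A dr) (hdr : 0 < dr) :
    ∃ C : Submodule (ZMod 2) (Fin n → ZMod 2),
      Module.finrank (ZMod 2) C = 4 ∧ IsLCD C ∧ minWt C = m * 8 + dr := by
  obtain ⟨hA1, ⟨u₀, hu₀, hu₀d⟩, hA3⟩ := hA
  set μ := (genG hn A).vecMulLinear with hμ
  refine ⟨LinearMap.range μ, ?_, ?_, ?_⟩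
  -- injectivity first
  · have hker : ∀ u : Fin 4 → ZMod 2, μ u = 0 → u = 0 := by
      intro u hu
      by_contra h0
      have hw := wt_vecMul_genG hn A ⟨hA1, ⟨u₀, hu₀, hu₀d⟩, hA3⟩ u h0
      rw [hu, wt_zero] at hw
      have := hA1 u h0
      omega
    have hinj : Function.Injective μ := by
      rw [← LinearMap.ker_eq_bot, LinearMap.ker_eq_bot']
      intro u hu; exact hker u hu
    rw [LinearMap.finrank_range_of_inj hinj]
    simp
  -- LCD
  · have hgram : ∀ j i : Fin 4, (∑ x : Fin n, genG hn A j x * genG hn A i x)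
        = ∑ t, A j t * A i t := by
      intro j i
      have := transport hn A (fun col => col j * col i)
      simp only at this
      rw [this, evec_sum j i, smul_zero, zero_add]
    rw [IsLCD, eq_bot_iff]
    rintro x ⟨hx1, hx2⟩
    obtain ⟨u, rfl⟩ := hx1
    have hrow : ∀ i : Fin 4, (fun x => genG hn A i x) ∈ LinearMap.range μ := by
      intro i
      refine ⟨Pi.single i 1, ?_⟩
      funext x
      rw [vecMul_genG_apply]
      simp [Pi.single_apply, ite_mul]
    have hu0 : u = 0 := by
      apply hA3
      intro i
      have h2 := hx2 (fun x => genG hn A i x) (hrow i)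
      calc ∑ j, u j * ∑ t, A j t * A i t
          = ∑ j, u j * ∑ x : Fin n, genG hn A j x * genG hn A i x := by
            apply Finset.sum_congr rfl; intro j _; rw [hgram]
        _ = ∑ j, ∑ x : Fin n, u j * (genG hn A j x * genG hn A i x) := by
            apply Finset.sum_congr rfl; intro j _; rw [Finset.mul_sum]
        _ = ∑ x : Fin n, ∑ j, u j * (genG hn A j x * genG hn A i x) := Finset.sum_comm
        _ = ∑ x : Fin n, (μ u x) * genG hn A i x := by
            apply Finset.sum_congr rfl; intro x _
            rw [vecMul_genG_apply hn A u x, Finset.sum_mul]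
            apply Finset.sum_congr rfl; intro j _; ring
        _ = 0 := h2
    rw [hu0, map_zero]
    exact Submodule.zero_mem ⊥
  -- minimum weight
  · have hx₀mem : (m * 8 + dr) ∈ {w | ∃ x ∈ LinearMap.range μ, x ≠ 0 ∧ wt x = w} := by
      refine ⟨μ u₀, ⟨u₀, rfl⟩, ?_, ?_⟩
      · intro h0
        have hw := wt_vecMul_genG hn A ⟨hA1, ⟨u₀, hu₀, hu₀d⟩, hA3⟩ u₀ hu₀
        rw [h0, wt_zero] at hw
        omega
      · rw [wt_vecMul_genG hn A ⟨hA1, ⟨u₀, hu₀, hu₀d⟩, hA3⟩ u₀ hu₀, hu₀d]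
    refine le_antisymm (Nat.sInf_le hx₀mem) (le_csInf ⟨_, hx₀mem⟩ ?_)
    rintro w ⟨x, ⟨u, rfl⟩, hx0, rfl⟩
    have hu : u ≠ 0 := by rintro rfl; rw [map_zero] at hx0; exact hx0 rfl
    rw [wt_vecMul_genG hn A ⟨hA1, ⟨u₀, hu₀, hu₀d⟩, hA3⟩ u hu]
    have := hA1 u hu
    omega

/-- The averaging (Plotkin-type) upper bound for `[n,4]` codes. -/
lemma upper_bound {n : ℕ} (C : Submodule (ZMod 2) (Fin n → ZMod 2))
    (hC : Module.finrank (ZMod 2) C = 4) : 15 * minWt C ≤ 8 * n := by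
  classical
  letI : Fintype C := Fintype.ofFinite C
  have hcard : Fintype.card C = 16 := by
    rw [Module.card_eq_pow_finrank (K := ZMod 2), hC]
    norm_num [ZMod.card]
  set F : Finset (Fin n → ZMod 2) := Set.toFinset (C : Set (Fin n → ZMod 2)) with hF
  have hmemF : ∀ x, x ∈ F ↔ x ∈ C := by intro x; simp [hF]
  have hFcard : F.card = 16 := by rw [hF, Set.toFinset_card]; exact hcard
  -- minimum weight is a lower bound for weights of nonzero codewords
  have hd_le : ∀ x ∈ C, x ≠ 0 → minWt C ≤ wt x := by
    intro x hx hx0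
    exact Nat.sInf_le ⟨x, hx, hx0, rfl⟩
  -- column counting bound
  have hcol : ∀ i : Fin n, (F.filter (fun x => x i ≠ 0)).card ≤ 8 := by
    intro i
    set Ai := F.filter (fun x => x i ≠ 0) with hAi
    set Bi := F.filter (fun x => ¬ x i ≠ 0) with hBi
    have hsum : Ai.card + Bi.card = 16 := by
      rw [hAi, hBi, Finset.card_filter_add_card_filter_not, hFcard]
    rcases Ai.eq_empty_or_nonempty with he | ⟨x₀, hx₀⟩
    · rw [he]; simp
    · have hx₀F : x₀ ∈ F ∧ x₀ i ≠ 0 := by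
        rw [hAi] at hx₀; exact Finset.mem_filter.mp hx₀
      have hle : Ai.card ≤ Bi.card := by
        apply Finset.card_le_card_of_injOn (fun x => x + x₀)
        · intro x hx
          rw [hAi] at hx
          obtain ⟨hxF, hxi⟩ := Finset.mem_filter.mp hx
          rw [hBi, Finset.mem_coe, Finset.mem_filter]
          constructor
          · rw [hmemF]; exact C.add_mem ((hmemF x).mp hxF) ((hmemF x₀).mp hx₀F.1)
          · exact not_not.mpr (zmod2_add _ _ hxi hx₀F.2)
        · intro a _ b _ hab
          exact add_right_cancel hab
      omega
  -- the total weight identity and bounds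
  have htotal : ∑ x ∈ F, wt x ≤ 8 * n := by
    have : ∑ x ∈ F, wt x = ∑ i : Fin n, (F.filter (fun x => x i ≠ 0)).card := by
      simp_rw [wt_eq_sum, Finset.card_filter]
      rw [Finset.sum_comm]
    rw [this]
    calc ∑ i : Fin n, (F.filter (fun x => x i ≠ 0)).card ≤ ∑ i : Fin n, 8 :=
          Finset.sum_le_sum (fun i _ => hcol i)
      _ = 8 * n := by simp [mul_comm]
  have hlow : 15 * minWt C ≤ ∑ x ∈ F, wt x := by
    have h0F : (0 : Fin n → ZMod 2) ∈ F := (hmemF 0).mpr C.zero_mem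
    have hsub : ∑ x ∈ F.erase 0, wt x ≤ ∑ x ∈ F, wt x :=
      Finset.sum_le_sum_of_subset (Finset.erase_subset _ _)
    have hec : (F.erase 0).card = 15 := by
      rw [Finset.card_erase_of_mem h0F, hFcard]
    have : (F.erase 0).card • minWt C ≤ ∑ x ∈ F.erase 0, wt x := by
      apply Finset.card_nsmul_le_sum
      intro x hx
      obtain ⟨hx0, hxF⟩ := Finset.mem_erase.mp hx
      exact hd_le x ((hmemF x).mp hxF) hx0
    rw [hec, smul_eq_mul] at this
    omega
  omega


theorem lcd_dim4_exact (n : ℕ) (hn : 4 ≤ n)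
    (h : n % 15 = 5 ∨ n % 15 = 9 ∨ n % 15 = 13) :
    dLCD n 4 = 8 * n / 15 := by
  obtain ⟨m, r, hmr, hr⟩ : ∃ m r, n = m * 15 + r ∧ r = n % 15 := by
    exact ⟨n / 15, n % 15, by omega, rfl⟩
  have hcon : ∃ C : Submodule (ZMod 2) (Fin n → ZMod 2),
      Module.finrank (ZMod 2) C = 4 ∧ IsLCD C ∧ minWt C = 8 * n / 15 := by
    rcases h with h5 | h9 | h13
    · obtain ⟨C, h1, h2, h3⟩ := construction (show n = m * 15 + 5 by omega) A5 goodA5 (by norm_num)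
      exact ⟨C, h1, h2, by omega⟩
    · obtain ⟨C, h1, h2, h3⟩ := construction (show n = m * 15 + 9 by omega) A9 goodA9 (by norm_num)
      exact ⟨C, h1, h2, by omega⟩
    · obtain ⟨C, h1, h2, h3⟩ := construction (show n = m * 15 + 13 by omega) A13 goodA13 (by norm_num)
      exact ⟨C, h1, h2, by omega⟩
  have hub : ∀ d ∈ {d | ∃ C : Submodule (ZMod 2) (Fin n → ZMod 2),
      Module.finrank (ZMod 2) C = 4 ∧ IsLCD C ∧ minWt C = d}, d ≤ 8 * n / 15 := by
    rintro d ⟨C, hC4, -, rfl⟩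
    have := upper_bound C hC4
    omega
  obtain ⟨C, hC1, hC2, hC3⟩ := hcon
  have hmem : (8 * n / 15) ∈ {d | ∃ C : Submodule (ZMod 2) (Fin n → ZMod 2),
      Module.finrank (ZMod 2) C = 4 ∧ IsLCD C ∧ minWt C = d} := ⟨C, hC1, hC2, hC3⟩
  rw [dLCD]
  exact le_antisymm (csSup_le ⟨_, hmem⟩ hub) (le_csSup ⟨8 * n / 15, fun d hd => hub d hd⟩ hmem)
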